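/- Let Γ be a group generated by a finite symmetric subset S with 1 ∈ S, and let ρ : Γ ↷ (X,ν) be a measure-class-preserving measurable action on a probability space. Then ρ is asymptotically expanding in measure if and only if ρ is S-asymptotically expanding in measure, i.e., there exists a function c̄ : (0,1/2] → ℝ_{>0} such that for every α ∈ (0,1/2] and every measurable A ⊆ X with α ≤ ν(A) ≤ 1/2 one has ν(S·A) > (1+c̄(α))·ν(A). -/

import Mathlib

open MeasureTheory Set Filter Pointwise
open scoped ENNReal

/-- The union `S · A = ⋃ s ∈ S, s • A` of the translates of `A` by elements of the
finite set `S ⊆ Γ`. -/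
def finSMul {Γ X : Type*} [Group Γ] [MulAction Γ X] (S : Finset Γ) (A : Set X) : Set X :=
  ⋃ s ∈ S, s • A

/-- `S` is a finite symmetric subset of `Γ` containing the identity. -/
def SymmFin {Γ : Type*} [Group Γ] (S : Finset Γ) : Prop :=
  (1 : Γ) ∈ S ∧ ∀ s ∈ S, s⁻¹ ∈ S

/-- The `S`-boundary `∂_S A = (S·A) \ A`. -/
def finBdry {Γ X : Type*} [Group Γ] [MulAction Γ X] (S : Finset Γ) (A : Set X) : Set X :=
  finSMul S A \ A

/-- `Y` is a domain of `(c,S)`-expansion: `ν((S·A) ∩ Y) > (1+c)·ν(A)` for every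
measurable `A ⊆ Y` with `0 < ν(A) ≤ ν(Y)/2`. -/
def ExpandsOn {Γ X : Type*} [Group Γ] [MulAction Γ X] [MeasurableSpace X]
    (ν : MeasureTheory.Measure X) (Y : Set X) (c : ℝ) (S : Finset Γ) : Prop :=
  ∀ A : Set X, MeasurableSet A → A ⊆ Y → 0 < ν A → ν A ≤ ν Y / 2 →
    (1 + ENNReal.ofReal c) * ν A < ν (finSMul S A ∩ Y)

/-- `Y` is a domain of expansion: `(c,S)`-expansion for some `c > 0` and some finite
symmetric `S ∋ 1`. -/
def ExpDomain (Γ : Type*) {X : Type*} [Group Γ] [MulAction Γ X] [MeasurableSpace X]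
    (ν : MeasureTheory.Measure X) (Y : Set X) : Prop :=
  ∃ c : ℝ, 0 < c ∧ ∃ S : Finset Γ, SymmFin S ∧ ExpandsOn ν Y c S

/-- The `(α,c,S)` asymptotic-expansion estimate on `Y`: `ν((S·A) ∩ Y) > (1+c)·ν(A)` for
every measurable `A ⊆ Y` with `α·ν(Y) ≤ ν(A) ≤ ν(Y)/2`. -/
def AsymExpandsOn {Γ X : Type*} [Group Γ] [MulAction Γ X] [MeasurableSpace X]
    (ν : MeasureTheory.Measure X) (Y : Set X) (α c : ℝ) (S : Finset Γ) : Prop :=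
  ∀ A : Set X, MeasurableSet A → A ⊆ Y → ENNReal.ofReal α * ν Y ≤ ν A → ν A ≤ ν Y / 2 →
    (1 + ENNReal.ofReal c) * ν A < ν (finSMul S A ∩ Y)

/-- `Y` is a domain of asymptotic expansion. -/
def AsymExpDomain (Γ : Type*) {X : Type*} [Group Γ] [MulAction Γ X] [MeasurableSpace X]
    (ν : MeasureTheory.Measure X) (Y : Set X) : Prop :=
  ∀ α : ℝ, 0 < α → α ≤ 1 / 2 →
    ∃ c : ℝ, 0 < c ∧ ∃ S : Finset Γ, SymmFin S ∧ AsymExpandsOn ν Y α c S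

/-- The action of `Γ` on the probability space `(X,ν)` is strongly ergodic: every almost
invariant sequence of measurable sets is asymptotically trivial. -/
def StronglyErgodic (Γ : Type*) {X : Type*} [Group Γ] [MulAction Γ X] [MeasurableSpace X]
    (ν : MeasureTheory.Measure X) : Prop :=
  ∀ C : ℕ → Set X, (∀ n, MeasurableSet (C n)) →
    (∀ γ : Γ, Filter.Tendsto (fun n => ν (symmDiff (C n) (γ • C n))) Filter.atTop (nhds 0)) →
    Filter.Tendsto (fun n => ν (C n) * (1 - ν (C n))) Filter.atTop (nhds 0)

/-- The action of `Γ` on `(X,ν)` is measure-class-preserving. -/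
def MeasClassPres (Γ : Type*) {X : Type*} [Group Γ] [MulAction Γ X] [MeasurableSpace X]
    (ν : MeasureTheory.Measure X) : Prop :=
  ∀ (γ : Γ) (A : Set X), MeasurableSet A → (ν (γ • A) = 0 ↔ ν A = 0)

/-- The action of `Γ` on `(X,ν)` is ergodic: every invariant measurable set is null or
conull. -/
def ErgodicAct (Γ : Type*) {X : Type*} [Group Γ] [MulAction Γ X] [MeasurableSpace X]
    (ν : MeasureTheory.Measure X) : Prop :=
  ∀ A : Set X, MeasurableSet A → (∀ γ : Γ, γ • A = A) → ν A = 0 ∨ ν Aᶜ = 0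

/-- `W` admits an exhaustion by measurable subsets satisfying `P`. -/
def ExhaustionBy {X : Type*} [MeasurableSpace X] (ν : MeasureTheory.Measure X)
    (W : Set X) (P : Set X → Prop) : Prop :=
  ∃ Y : ℕ → Set X, Monotone Y ∧ (∀ n, MeasurableSet (Y n)) ∧ (∀ n, Y n ⊆ W) ∧
    (∀ n, P (Y n)) ∧ ν (W \ ⋃ n, Y n) = 0

section Aux
variable {Γ X : Type*} [Group Γ] [MulAction Γ X] [DecidableEq Γ]

lemma mem_finSMul {S : Finset Γ} {A : Set X} {x : X} :
    x ∈ finSMul S A ↔ ∃ s ∈ S, x ∈ s • A := by simp [finSMul]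

lemma finSMul_mono {S : Finset Γ} {A B : Set X} (h : A ⊆ B) :
    finSMul S A ⊆ finSMul S B := by
  intro x hx
  obtain ⟨s, hs, hx⟩ := mem_finSMul.1 hx
  exact mem_finSMul.2 ⟨s, hs, Set.smul_set_mono h hx⟩

lemma finSMul_subset {S T : Finset Γ} (h : S ⊆ T) (A : Set X) :
    finSMul S A ⊆ finSMul T A := by
  intro x hx
  obtain ⟨s, hs, hx⟩ := mem_finSMul.1 hx
  exact mem_finSMul.2 ⟨s, h hs, hx⟩

lemma subset_finSMul {S : Finset Γ} (h : (1 : Γ) ∈ S) (A : Set X) :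
    A ⊆ finSMul S A := fun x hx =>
  mem_finSMul.2 ⟨1, h, by simpa using hx⟩

lemma finSMul_one (A : Set X) : finSMul (1 : Finset Γ) A = A := by
  ext x
  simp [finSMul, Finset.mem_one]

lemma finSMul_mul (S T : Finset Γ) (A : Set X) :
    finSMul (S * T) A = finSMul S (finSMul T A) := by
  ext x
  simp only [mem_finSMul, Set.mem_smul_set_iff_inv_smul_mem]
  constructor
  · rintro ⟨u, hu, hx⟩
    obtain ⟨s, hs, t, ht, rfl⟩ := Finset.mem_mul.1 hu
    exact ⟨s, hs, t, ht, by rwa [mul_inv_rev, mul_smul] at hx⟩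
  · rintro ⟨s, hs, t, ht, hx⟩
    exact ⟨s * t, Finset.mul_mem_mul hs ht, by rwa [mul_inv_rev, mul_smul]⟩

lemma finSMul_union (S : Finset Γ) (A B : Set X) :
    finSMul S (A ∪ B) = finSMul S A ∪ finSMul S B := by
  ext x
  simp only [mem_finSMul, Set.smul_set_union, Set.mem_union]
  constructor
  · rintro ⟨s, hs, hx | hx⟩
    exacts [Or.inl ⟨s, hs, hx⟩, Or.inr ⟨s, hs, hx⟩]
  · rintro (⟨s, hs, hx⟩ | ⟨s, hs, hx⟩)
    exacts [⟨s, hs, Or.inl hx⟩, ⟨s, hs, Or.inr hx⟩]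

lemma finSMul_pow_succ (S : Finset Γ) (k : ℕ) (A : Set X) :
    finSMul (S ^ (k + 1)) A = finSMul S (finSMul (S ^ k) A) := by
  rw [pow_succ', finSMul_mul]

lemma inv_mem_pow {S : Finset Γ} (hS : ∀ s ∈ S, s⁻¹ ∈ S) {γ : Γ} :
    ∀ {k : ℕ}, γ ∈ S ^ k → γ⁻¹ ∈ S ^ k := by
  intro k
  induction k generalizing γ with
  | zero => intro h; simp only [pow_zero, Finset.mem_one] at h ⊢; simp [h]
  | succ k ih =>
    intro h
    rw [pow_succ] at h
    obtain ⟨a, ha, b, hb, rfl⟩ := Finset.mem_mul.1 h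
    rw [mul_inv_rev, pow_succ']
    exact Finset.mul_mem_mul (hS b hb) (ih ha)

variable [MeasurableSpace X]

lemma measurableSet_smul_set (hmeas : ∀ γ : Γ, Measurable fun x : X => γ • x)
    (γ : Γ) {A : Set X} (hA : MeasurableSet A) : MeasurableSet (γ • A) := by
  have h : γ • A = (fun x : X => γ⁻¹ • x) ⁻¹' A := by
    ext x
    simp [Set.mem_smul_set_iff_inv_smul_mem]
  rw [h]
  exact (hmeas γ⁻¹) hA

lemma measurableSet_finSMul (hmeas : ∀ γ : Γ, Measurable fun x : X => γ • x)
    (S : Finset Γ) {A : Set X} (hA : MeasurableSet A) : MeasurableSet (finSMul S A) :=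
  S.measurableSet_biUnion fun s _ => measurableSet_smul_set hmeas s hA

lemma finSMul_pow_subset {S : Finset Γ} (h1 : (1 : Γ) ∈ S) (A : Set X) :
    ∀ k : ℕ, finSMul (S ^ k) A ⊆ A ∪ finSMul (S ^ k) (finSMul S A \ A) := by
  intro k
  induction k with
  | zero => rw [pow_zero, finSMul_one]; exact Set.subset_union_left
  | succ k ih =>
    have h1k : (1 : Γ) ∈ S ^ (k + 1) := Finset.one_mem_pow h1
    calc finSMul (S ^ (k + 1)) A = finSMul S (finSMul (S ^ k) A) := finSMul_pow_succ ..
      _ ⊆ finSMul S (A ∪ finSMul (S ^ k) (finSMul S A \ A)) := finSMul_mono ih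
      _ = finSMul S A ∪ finSMul (S ^ (k + 1)) (finSMul S A \ A) := by
          rw [finSMul_union, finSMul_pow_succ]
      _ ⊆ A ∪ finSMul (S ^ (k + 1)) (finSMul S A \ A) := by
          intro x hx
          rcases hx with hx | hx
          · by_cases hxA : x ∈ A
            · exact Or.inl hxA
            · exact Or.inr (subset_finSMul h1k _ ⟨hx, hxA⟩)
          · exact Or.inr hx

end Aux

lemma epsdelta {X : Type*} [MeasurableSpace X] (μ ν : Measure X)
    [IsFiniteMeasure μ] [IsFiniteMeasure ν] (hac : μ ≪ ν) {ε : ℝ≥0∞} (hε : ε ≠ 0) :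
    ∃ δ > (0 : ℝ≥0∞), ∀ s : Set X, MeasurableSet s → ν s < δ → μ s < ε := by
  obtain ⟨δ, hδ, h⟩ := exists_pos_setLIntegral_lt_of_measure_lt (μ := ν)
    (f := μ.rnDeriv ν) (Measure.lintegral_rnDeriv_lt_top μ ν).ne hε
  refine ⟨δ, hδ, fun s hs hνs => ?_⟩
  rw [← Measure.setLIntegral_rnDeriv hac]
  exact h s hνs


/-- Lemma 3.13: for a measure-class-preserving action of a group
generated by a finite symmetric set `S ∋ 1` on a probability space, asymptotic expansion
in measure is equivalent to `S`-asymptotic expansion in measure. -/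
theorem asymptoticallyExpanding_iff_S_asymptoticallyExpanding
    {Γ X : Type*} [Group Γ] [Countable Γ] [MulAction Γ X] [MeasurableSpace X]
    (ν : Measure X) [IsProbabilityMeasure ν]
    (hmeas : ∀ γ : Γ, Measurable fun x : X => γ • x)
    (hmcp : MeasClassPres Γ ν)
    (S : Finset Γ) (hS : SymmFin S) (hgen : Subgroup.closure (S : Set Γ) = ⊤) :
    AsymExpDomain Γ ν Set.univ ↔
      ∀ α : ℝ, 0 < α → α ≤ 1 / 2 →
        ∃ c : ℝ, 0 < c ∧ AsymExpandsOn ν Set.univ α c S := by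
  constructor
  · intro hdom
    classical
    have h1ν : ν (Set.univ : Set X) = 1 := measure_univ
    intro α hα hα2
    obtain ⟨c, hc, T, hTsymm, hT⟩ := hdom α hα hα2
    -- find n with T ⊆ S ^ n
    have hone : ∀ γ : Γ, ∃ k : ℕ, γ ∈ S ^ k := by
      intro γ
      have hγ : γ ∈ Subgroup.closure (S : Set Γ) := hgen ▸ Subgroup.mem_top γ
      refine Subgroup.closure_induction (fun x hx => ⟨1, by simpa using hx⟩)
        ⟨0, by simp⟩ (fun x y _ _ hx hy => ?_) (fun x _ hx => ?_) hγ
      · obtain ⟨k, hk⟩ := hx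
        obtain ⟨l, hl⟩ := hy
        exact ⟨k + l, by rw [pow_add]; exact Finset.mul_mem_mul hk hl⟩
      · obtain ⟨k, hk⟩ := hx
        exact ⟨k, inv_mem_pow hS.2 hk⟩
    have hTn : ∃ n : ℕ, ∀ t ∈ T, t ∈ S ^ n := by
      choose f hf using fun t : {x // x ∈ T} => hone t.1
      refine ⟨T.attach.sup f, fun t ht => ?_⟩
      exact Finset.pow_subset_pow_right hS.1 (Finset.le_sup (Finset.mem_attach T ⟨t, ht⟩))
        (hf ⟨t, ht⟩)
    obtain ⟨n, hn⟩ := hTn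
    set m : ℕ := ⌈(c * α)⁻¹⌉₊ + 1 with hm
    set N : ℕ := m * n with hN
    set q : ℝ≥0∞ := ENNReal.ofReal (c * α) with hq
    have hcα : 0 < c * α := mul_pos hc hα
    have hq0 : q ≠ 0 := by simp [hq, ENNReal.ofReal_pos.2 hcα, (ENNReal.ofReal_pos.2 hcα).ne']
    have hqtop : q ≠ ⊤ := ENNReal.ofReal_ne_top
    -- the measure μ
    set F : Finset Γ := S ^ N with hF
    set μ : Measure X := ∑ γ ∈ F, Measure.map (fun x => γ⁻¹ • x) ν with hμ
    have hμapp : ∀ B : Set X, MeasurableSet B → μ B = ∑ γ ∈ F, ν (γ • B) := by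
      intro B hB
      rw [hμ, Measure.finset_sum_apply]
      refine Finset.sum_congr rfl fun γ _ => ?_
      rw [Measure.map_apply (hmeas γ⁻¹) hB]
      congr 1
      rw [Set.preimage_smul, inv_inv]
    haveI : IsFiniteMeasure μ := by
      constructor
      rw [hμapp Set.univ MeasurableSet.univ]
      refine ENNReal.sum_lt_top.2 fun γ _ => ?_
      exact (measure_mono (Set.subset_univ _)).trans_lt (by simp [h1ν])
    have hac : μ ≪ ν := by
      refine Measure.AbsolutelyContinuous.mk fun B hB hB0 => ?_
      rw [hμapp B hB]
      exact Finset.sum_eq_zero fun γ _ => (hmcp γ B hB).2 hB0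
    obtain ⟨δ, hδ, hεδ⟩ := epsdelta μ ν hac (ε := q / 2)
      (by simp [ENNReal.div_eq_zero_iff, hq0])
    set d : ℝ≥0∞ := min δ 1 with hd
    have hd0 : d ≠ 0 := by
      rw [hd]
      exact (lt_min hδ zero_lt_one).ne'
    have hdtop : d ≠ ⊤ := ne_top_of_le_ne_top ENNReal.one_ne_top (min_le_right _ _)
    have hdpos : 0 < d.toReal := ENNReal.toReal_pos hd0 hdtop
    refine ⟨d.toReal / 2, by linarith, ?_⟩
    intro A hA hAsub hAlow hAhi
    by_contra hcon
    push_neg at hcon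
    rw [Set.inter_univ] at hcon
    set B : Set X := finSMul S A \ A with hB
    have hBmeas : MeasurableSet B := (measurableSet_finSMul hmeas S hA).diff hA
    have hAfin : ν A ≠ ⊤ := measure_ne_top ν A
    have hASA : A ⊆ finSMul S A := subset_finSMul hS.1 A
    have hA1 : ν A ≤ 1 := by rw [← h1ν]; exact measure_mono (Set.subset_univ A)
    have hνB : ν B < δ := by
      have hd1 : ν B = ν (finSMul S A) - ν A := measure_diff hASA hA.nullMeasurableSet hAfin
      have hd2 : ν (finSMul S A) ≤ ENNReal.ofReal (d.toReal / 2) * ν A + ν A := by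
        calc ν (finSMul S A) ≤ (1 + ENNReal.ofReal (d.toReal / 2)) * ν A := hcon
          _ = ENNReal.ofReal (d.toReal / 2) * ν A + ν A := by ring
      have hd3 : ν B ≤ ENNReal.ofReal (d.toReal / 2) * ν A := by
        rw [hd1]; exact tsub_le_iff_right.2 hd2
      have hd4 : ENNReal.ofReal (d.toReal / 2) = d / 2 := by
        rw [ENNReal.ofReal_div_of_pos two_pos, ENNReal.ofReal_toReal hdtop]
        norm_num
      calc ν B ≤ ENNReal.ofReal (d.toReal / 2) * ν A := hd3
        _ ≤ ENNReal.ofReal (d.toReal / 2) * 1 := by gcongr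
        _ = d / 2 := by rw [mul_one, hd4]
        _ < d := ENNReal.half_lt_self hd0 hdtop
        _ ≤ δ := min_le_left _ _
    have hμB : μ B < q / 2 := hεδ B hBmeas hνB
    have hFB : ν (finSMul F B) ≤ μ B := by
      rw [hμapp B hBmeas]
      exact measure_biUnion_finset_le F _
    set g : ℕ → Set X := fun k => finSMul (S ^ k) A with hg
    have hgmeas : ∀ k, MeasurableSet (g k) := fun k => measurableSet_finSMul hmeas _ hA
    have hAg : ∀ k, A ⊆ g k := fun k => subset_finSMul (Finset.one_mem_pow hS.1) A
    have hupper : ∀ k, k ≤ N → ν (g k) ≤ ν A + q / 2 := by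
      intro k hk
      have hsub : g k ⊆ A ∪ finSMul F B := by
        refine (finSMul_pow_subset hS.1 A k).trans ?_
        exact Set.union_subset_union_right A
          (finSMul_subset (Finset.pow_subset_pow_right hS.1 hk) B)
      calc ν (g k) ≤ ν (A ∪ finSMul F B) := measure_mono hsub
        _ ≤ ν A + ν (finSMul F B) := measure_union_le _ _
        _ ≤ ν A + q / 2 := add_le_add le_rfl (hFB.trans hμB.le)
    have hαA : ENNReal.ofReal α ≤ ν A := by
      rw [← mul_one (ENNReal.ofReal α), ← h1ν]; exact hAlow
    have key : ∀ j : ℕ, (∀ i, i < j → ν (g (i * n)) ≤ 1 / 2) →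
        ν A + (j : ℝ≥0∞) * q ≤ ν (g (j * n)) := by
      intro j
      induction j with
      | zero => intro _; simp [hg, finSMul_one]
      | succ j ih =>
        intro h
        have hle : ν (g (j * n)) ≤ 1 / 2 := h j (Nat.lt_succ_self j)
        have ih' := ih fun i hi => h i (hi.trans (Nat.lt_succ_self j))
        have hgA : ν A ≤ ν (g (j * n)) := measure_mono (hAg _)
        have hpow : finSMul (S ^ n) (g (j * n)) = g ((j + 1) * n) := by
          show finSMul (S ^ n) (finSMul (S ^ (j * n)) A) = finSMul (S ^ ((j + 1) * n)) A
          rw [← finSMul_mul, ← pow_add]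
          congr 2
          ring
        have hincl : finSMul T (g (j * n)) ∩ Set.univ ⊆ g ((j + 1) * n) := by
          rw [Set.inter_univ, ← hpow]
          exact finSMul_subset (fun t ht => hn t ht) _
        have hexp := hT (g (j * n)) (hgmeas _) (Set.subset_univ _)
          (by rw [h1ν, mul_one]; exact hαA.trans hgA)
          (by rw [h1ν]; exact hle)
        calc ν A + ((j + 1 : ℕ) : ℝ≥0∞) * q = (ν A + (j : ℝ≥0∞) * q) + q := by
              push_cast; ring
          _ ≤ ν (g (j * n)) + q := by gcongr
          _ ≤ ν (g (j * n)) + ENNReal.ofReal c * ν (g (j * n)) := by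
              gcongr
              calc q = ENNReal.ofReal c * ENNReal.ofReal α := by
                    rw [hq, ENNReal.ofReal_mul hc.le]
                _ ≤ ENNReal.ofReal c * ν (g (j * n)) := by
                    gcongr; exact hαA.trans hgA
          _ = (1 + ENNReal.ofReal c) * ν (g (j * n)) := by ring
          _ ≤ ν (finSMul T (g (j * n)) ∩ Set.univ) := hexp.le
          _ ≤ ν (g ((j + 1) * n)) := measure_mono hincl
    have hhalf1 : (1 : ℝ≥0∞) / 2 < 1 := ENNReal.half_lt_self one_ne_zero ENNReal.one_ne_top
    have hex : ∃ j, j ≤ m ∧ 1 / 2 < ν (g (j * n)) := by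
      by_contra h
      push_neg at h
      have hkey := key m fun i hi => h i hi.le
      have hmq : (1 : ℝ≥0∞) ≤ (m : ℝ≥0∞) * q := by
        rw [hq, ← ENNReal.ofReal_natCast, ← ENNReal.ofReal_mul (by positivity),
          ← ENNReal.ofReal_one]
        apply ENNReal.ofReal_le_ofReal
        have hm1 : (c * α)⁻¹ ≤ (m : ℝ) := by
          rw [hm]
          push_cast
          have := Nat.le_ceil (c * α)⁻¹
          linarith
        calc (1 : ℝ) = (c * α)⁻¹ * (c * α) := (inv_mul_cancel₀ hcα.ne').symm
          _ ≤ (m : ℝ) * (c * α) := mul_le_mul_of_nonneg_right hm1 hcα.le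
      have hbad : (1 : ℝ≥0∞) ≤ 1 / 2 :=
        hmq.trans (le_add_self.trans (hkey.trans (h m le_rfl)))
      exact absurd hbad (not_le.2 hhalf1)
    have hQ : ∃ j, 1 / 2 < ν (g (j * n)) := ⟨hex.choose, hex.choose_spec.2⟩
    set j0 := Nat.find hQ with hj0
    have hj0spec : 1 / 2 < ν (g (j0 * n)) := Nat.find_spec hQ
    have hj0m : j0 ≤ m := (Nat.find_min' hQ hex.choose_spec.2).trans hex.choose_spec.1
    have hj0pos : 1 ≤ j0 := by
      rcases Nat.eq_zero_or_pos j0 with h0 | h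
      · exfalso
        rw [h0] at hj0spec
        have hg0 : ν (g (0 * n)) = ν A := by simp [hg, finSMul_one]
        rw [hg0] at hj0spec
        rw [h1ν] at hAhi
        exact absurd hj0spec (not_lt.2 hAhi)
      · exact h
    have hlow2 := key j0 fun i hi => not_lt.1 (Nat.find_min hQ hi)
    have hq_le : ν A + q ≤ ν (g (j0 * n)) := by
      refine le_trans ?_ hlow2
      gcongr
      calc q = 1 * q := (one_mul q).symm
        _ ≤ (j0 : ℝ≥0∞) * q := by gcongr; exact_mod_cast hj0pos
    have hup := hupper (j0 * n) (Nat.mul_le_mul_right n hj0m)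
    have hfin : ν A + q ≤ ν A + q / 2 := hq_le.trans hup
    have hcontr : q ≤ q / 2 := by
      exact (ENNReal.add_le_add_iff_left hAfin).1 hfin
    exact absurd hcontr (not_le.2 (ENNReal.half_lt_self hq0 hqtop))
  · intro h α hα hα2
    obtain ⟨c, hc, h'⟩ := h α hα hα2
    exact ⟨c, hc, S, hS, h'⟩
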